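/- Let S be a metrizable topological space, let f : S → ℝ be bounded and continuous, and let g, g_N : S → ℝ (N ∈ ℕ) be bounded continuous functions with sup_{y ∈ S} |g_N(y) − g(y)| → 0 as N → ∞. Let (Q_N) be a sequence of Borel probability measures on the path space P(S) converging weakly to a Borel probability measure Q. Assume that for every N, every 0 ≤ a ≤ b, and every bounded continuous function φ : P(S) → ℝ that is measurable with respect to σ_a, one has ∫ (f(γ(b)) − ∫_a^b g_N(γ(s)) ds) φ(γ) dQ_N(γ) = ∫ f(γ(a)) φ(γ) dQ_N(γ). Then for every 0 ≤ a ≤ b and every bounded continuous σ_a-measurable φ : P(S) → ℝ, it holds that ∫ (f(γ(b)) − ∫_a^b g(γ(s)) ds) φ(γ) dQ(γ) = ∫ f(γ(a)) φ(γ) dQ(γ). (In other words, the martingale-problem property for the operators g_N passes to the weak limit with limit operator g.) -/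

import Mathlib

open MeasureTheory Filter
open scoped NNReal Topology BoundedContinuousFunction

/-- The σ-algebra on path space `C(ℝ≥0, S)` generated by the evaluation maps
`γ ↦ γ s` for `0 ≤ s ≤ a`. -/
def evalSigma (S : Type*) [TopologicalSpace S] [MeasurableSpace S] (a : ℝ≥0) :
    MeasurableSpace C(ℝ≥0, S) :=
  ⨆ s ∈ Set.Iic a, MeasurableSpace.comap (fun γ : C(ℝ≥0, S) => γ s) inferInstance

section aux

variable {S : Type*} [TopologicalSpace S]

lemma aux_cont (h : S →ᵇ ℝ) (a b : ℝ≥0) :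
    Continuous fun γ : C(ℝ≥0, S) => ∫ s in (a : ℝ)..(b : ℝ), h (γ s.toNNReal) := by
  apply intervalIntegral.continuous_parametric_intervalIntegral_of_continuous'
  exact h.continuous.comp <| continuous_eval.comp <|
    continuous_fst.prodMk (continuous_real_toNNReal.comp continuous_snd)

lemma aux_norm_int (h : S →ᵇ ℝ) (a b : ℝ≥0) (hab : a ≤ b) (γ : C(ℝ≥0, S)) :
    ‖∫ s in (a : ℝ)..(b : ℝ), h (γ s.toNNReal)‖ ≤ ‖h‖ * ((b : ℝ) - a) := by
  have := intervalIntegral.norm_integral_le_of_norm_le_const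
    (C := ‖h‖) (f := fun s : ℝ => h (γ s.toNNReal)) (a := (a : ℝ)) (b := (b : ℝ))
    (fun x _ => h.norm_coe_le_norm _)
  rwa [abs_of_nonneg (sub_nonneg.2 (by exact_mod_cast hab))] at this

/-- The bounded continuous function `γ ↦ (f (γ b) - ∫_a^b h (γ s) ds) * φ γ`. -/
noncomputable def pathBCF (f h : S →ᵇ ℝ) (φ : C(ℝ≥0, S) →ᵇ ℝ) (a b : ℝ≥0) (hab : a ≤ b) :
    C(ℝ≥0, S) →ᵇ ℝ :=
  BoundedContinuousFunction.ofNormedAddCommGroup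
    (fun γ => (f (γ b) - ∫ s in (a : ℝ)..(b : ℝ), h (γ s.toNNReal)) * φ γ)
    (by
      apply Continuous.mul _ φ.continuous
      exact (f.continuous.comp (continuous_eval_const _)).sub (aux_cont h a b))
    ((‖f‖ + ‖h‖ * ((b : ℝ) - a)) * ‖φ‖)
    (by
      intro γ
      rw [norm_mul]
      refine mul_le_mul ((norm_sub_le _ _).trans (add_le_add (f.norm_coe_le_norm _)
        (aux_norm_int h a b hab γ))) (φ.norm_coe_le_norm _) (norm_nonneg _)
        (add_nonneg (norm_nonneg _) (mul_nonneg (norm_nonneg _)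
          (sub_nonneg.2 (by exact_mod_cast hab)))))

@[simp] lemma pathBCF_apply (f h : S →ᵇ ℝ) (φ : C(ℝ≥0, S) →ᵇ ℝ) (a b : ℝ≥0) (hab : a ≤ b)
    (γ : C(ℝ≥0, S)) :
    pathBCF f h φ a b hab γ = (f (γ b) - ∫ s in (a : ℝ)..(b : ℝ), h (γ s.toNNReal)) * φ γ :=
  rfl

/-- The bounded continuous function `γ ↦ f (γ a) * φ γ`. -/
noncomputable def pathBCF0 (f : S →ᵇ ℝ) (φ : C(ℝ≥0, S) →ᵇ ℝ) (a : ℝ≥0) :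
    C(ℝ≥0, S) →ᵇ ℝ :=
  BoundedContinuousFunction.ofNormedAddCommGroup
    (fun γ => f (γ a) * φ γ)
    ((f.continuous.comp (continuous_eval_const _)).mul φ.continuous)
    (‖f‖ * ‖φ‖)
    (fun γ => by rw [norm_mul]; gcongr; exacts [f.norm_coe_le_norm _, φ.norm_coe_le_norm _])

@[simp] lemma pathBCF0_apply (f : S →ᵇ ℝ) (φ : C(ℝ≥0, S) →ᵇ ℝ) (a : ℝ≥0) (γ : C(ℝ≥0, S)) :
    pathBCF0 f φ a γ = f (γ a) * φ γ := rfl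

end aux

/-- the martingale-problem property passes to the weak limit. -/
theorem martingale_problem_passes_to_weak_limit
    {S : Type*} [TopologicalSpace S] [TopologicalSpace.MetrizableSpace S]
    [MeasurableSpace S] [BorelSpace S]
    [MeasurableSpace C(ℝ≥0, S)] [BorelSpace C(ℝ≥0, S)]
    (f g : S →ᵇ ℝ) (gN : ℕ → (S →ᵇ ℝ))
    (hg : Tendsto (fun N => ‖gN N - g‖) atTop (𝓝 0))
    (Q : ℕ → Measure C(ℝ≥0, S)) (Qlim : Measure C(ℝ≥0, S))
    (hQ : ∀ N, IsProbabilityMeasure (Q N)) (hQlim : IsProbabilityMeasure Qlim)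
    (hweak : ∀ φ : C(ℝ≥0, S) →ᵇ ℝ,
      Tendsto (fun N => ∫ γ, φ γ ∂(Q N)) atTop (𝓝 (∫ γ, φ γ ∂Qlim)))
    (hmart : ∀ N : ℕ, ∀ a b : ℝ≥0, a ≤ b →
      ∀ φ : C(ℝ≥0, S) →ᵇ ℝ, Measurable[evalSigma S a] (φ : C(ℝ≥0, S) → ℝ) →
        ∫ γ, (f (γ b) - ∫ s in (a : ℝ)..(b : ℝ), gN N (γ s.toNNReal)) * φ γ ∂(Q N)
          = ∫ γ, f (γ a) * φ γ ∂(Q N)) :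
    ∀ a b : ℝ≥0, a ≤ b →
      ∀ φ : C(ℝ≥0, S) →ᵇ ℝ, Measurable[evalSigma S a] (φ : C(ℝ≥0, S) → ℝ) →
        ∫ γ, (f (γ b) - ∫ s in (a : ℝ)..(b : ℝ), g (γ s.toNNReal)) * φ γ ∂Qlim
          = ∫ γ, f (γ a) * φ γ ∂Qlim := by
  intro a b hab φ hφ
  set F : C(ℝ≥0, S) →ᵇ ℝ := pathBCF f g φ a b hab with hF
  set G : C(ℝ≥0, S) →ᵇ ℝ := pathBCF0 f φ a with hG
  set FN : ℕ → (C(ℝ≥0, S) →ᵇ ℝ) := fun N => pathBCF f (gN N) φ a b hab with hFN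
  -- the martingale identity for each N
  have hid : ∀ N, ∫ γ, FN N γ ∂(Q N) = ∫ γ, G γ ∂(Q N) := fun N => hmart N a b hab φ hφ
  -- the difference between F and FN is small
  have hdiff : ∀ N, |∫ γ, F γ ∂(Q N) - ∫ γ, FN N γ ∂(Q N)|
      ≤ ‖gN N - g‖ * ((b : ℝ) - a) * ‖φ‖ := by
    intro N
    have := hQ N
    rw [← integral_sub (F.integrable (Q N)) ((FN N).integrable (Q N))]
    rw [← Real.norm_eq_abs]
    have hb : ∀ γ : C(ℝ≥0, S),
        ‖F γ - FN N γ‖ ≤ ‖gN N - g‖ * ((b : ℝ) - a) * ‖φ‖ := by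
      intro γ
      have : F γ - FN N γ =
          (∫ s in (a : ℝ)..(b : ℝ), ((gN N - g) (γ s.toNNReal))) * φ γ := by
        simp only [hF, hFN, pathBCF_apply, BoundedContinuousFunction.coe_sub, Pi.sub_apply]
        rw [intervalIntegral.integral_sub]
        · ring
        · exact ((gN N).continuous.comp (γ.continuous.comp continuous_real_toNNReal)).intervalIntegrable _ _
        · exact (g.continuous.comp (γ.continuous.comp continuous_real_toNNReal)).intervalIntegrable _ _
      rw [this, norm_mul]
      exact mul_le_mul (aux_norm_int (gN N - g) a b hab γ) (φ.norm_coe_le_norm _)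
        (norm_nonneg _)
        (mul_nonneg (norm_nonneg _) (sub_nonneg.2 (by exact_mod_cast hab)))
    calc ‖∫ γ, (F γ - FN N γ) ∂(Q N)‖
        ≤ (‖gN N - g‖ * ((b : ℝ) - a) * ‖φ‖) * ((Q N) Set.univ).toReal :=
          norm_integral_le_of_norm_le_const (Eventually.of_forall hb)
      _ = ‖gN N - g‖ * ((b : ℝ) - a) * ‖φ‖ := by simp
  -- ∫ F dQ_N - ∫ FN dQ_N → 0
  have h0 : Tendsto (fun N => ∫ γ, F γ ∂(Q N) - ∫ γ, FN N γ ∂(Q N)) atTop (𝓝 0) := by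
    have hbnd : Tendsto (fun N => ‖gN N - g‖ * ((b : ℝ) - a) * ‖φ‖) atTop (𝓝 0) := by
      have := (hg.mul_const ((b : ℝ) - a)).mul_const ‖φ‖
      simpa using this
    refine squeeze_zero_norm (fun N => ?_) hbnd
    simpa [Real.norm_eq_abs] using hdiff N
  -- combine: ∫ FN dQ_N = ∫ G dQ_N → ∫ G dQlim, and ∫ F dQ_N → ∫ F dQlim
  have h1 : Tendsto (fun N => ∫ γ, F γ ∂(Q N)) atTop (𝓝 (∫ γ, F γ ∂Qlim)) := hweak F
  have h2 : Tendsto (fun N => ∫ γ, FN N γ ∂(Q N)) atTop (𝓝 (∫ γ, G γ ∂Qlim)) := by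
    have := hweak G
    simpa [hid] using this
  have h3 : Tendsto (fun N => ∫ γ, F γ ∂(Q N)) atTop (𝓝 (∫ γ, G γ ∂Qlim)) := by
    have := h0.add h2
    simpa using this
  exact tendsto_nhds_unique h1 h3
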